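/- Let K ≥ 1, n ≥ K+1 be integers, s ∈ [0,1], and let v₁ < v₂ be integers with K+1 ≤ v₁ < v₂ ≤ n. Under the random pruning-edge model, the probability that both v₁ ∈ Z and v₂ ∈ Z equals (1-s)^{(v₁-K-1)(n-v₁+1) + (v₂-v₁)(n-v₂+1)}. -/

import Mathlib

open MeasureTheory

/-- Potential pruning edges: pairs `(u,w)` with `1 ≤ u` and `u + K < w ≤ n`. -/
abbrev EdgeIdx (K n : ℕ) : Type :=
  {p : Fin (n + 1) × Fin (n + 1) // 1 ≤ (p.1 : ℕ) ∧ (p.1 : ℕ) + K < (p.2 : ℕ)}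

/-- The pruning edge `e` covers the vertex `v` if `u + K < v ≤ w`. -/
def covers {K n : ℕ} (e : EdgeIdx K n) (v : ℕ) : Prop :=
  (e.1.1 : ℕ) + K < v ∧ v ≤ (e.1.2 : ℕ)

instance {K n : ℕ} (e : EdgeIdx K n) (v : ℕ) : Decidable (covers e v) := by
  unfold covers; infer_instance

/-- The set `Z(ω)` of vertices `v ∈ {K+1, …, n}` covered by no present pruning edge. -/
def Zset (K n : ℕ) (ω : EdgeIdx K n → Bool) : Finset ℕ :=
  (Finset.Icc (K + 1) n).filter fun v => ∀ e : EdgeIdx K n, ω e = true → ¬ covers e v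

/-- The product probability measure on outcomes `ω : EdgeIdx K n → Bool`, where each
potential pruning edge is independently present with probability `s` (for `s ∈ [0,1]`;
the parameter is clamped to `[0,1]`, which is the identity for such `s`). -/
noncomputable def prunMeasure (K n : ℕ) (s : ℝ) : Measure (EdgeIdx K n → Bool) :=
  Measure.pi fun _ =>
    (PMF.bernoulli (min (Real.toNNReal s) 1) (min_le_right _ _)).toMeasure

/-- The probability that two vertices `v₁ < v₂` both belong to `Z` equals
`(1-s)^((v₁-K-1)(n-v₁+1) + (v₂-v₁)(n-v₂+1))`. -/
theorem stmt5 (K n v₁ v₂ : ℕ) (hK : 1 ≤ K) (hn : K + 1 ≤ n)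
    (s : ℝ) (hs0 : 0 ≤ s) (hs1 : s ≤ 1)
    (hv1 : K + 1 ≤ v₁) (hv12 : v₁ < v₂) (hv2 : v₂ ≤ n) :
    prunMeasure K n s
        {ω | (∀ e : EdgeIdx K n, ω e = true → ¬ covers e v₁) ∧
             (∀ e : EdgeIdx K n, ω e = true → ¬ covers e v₂)}
      = ENNReal.ofReal
          ((1 - s) ^ ((v₁ - K - 1) * (n - v₁ + 1) + (v₂ - v₁) * (n - v₂ + 1))) := by
  classical
  set c : ENNReal := ENNReal.ofReal (1 - s) with hc
  set P : EdgeIdx K n → Prop := fun e => covers e v₁ ∨ covers e v₂ with hP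
  -- rewrite the event as a product set
  have hset : {ω : EdgeIdx K n → Bool |
        (∀ e : EdgeIdx K n, ω e = true → ¬ covers e v₁) ∧
        (∀ e : EdgeIdx K n, ω e = true → ¬ covers e v₂)}
      = Set.pi Set.univ (fun e : EdgeIdx K n =>
          if P e then ({false} : Set Bool) else Set.univ) := by
    ext ω
    simp only [Set.mem_setOf_eq, Set.mem_pi, Set.mem_univ, forall_true_left]
    constructor
    · rintro ⟨h1, h2⟩ e
      by_cases h : P e
      · rw [if_pos h]
        cases hb : ω e with
        | false => rfl
        | true =>
          rcases h with h | h
          · exact absurd h (h1 e hb)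
          · exact absurd h (h2 e hb)
      · rw [if_neg h]; trivial
    · intro h
      refine ⟨fun e hb hc1 => ?_, fun e hb hc2 => ?_⟩
      · have := h e
        rw [if_pos (Or.inl hc1)] at this
        simp [hb] at this
      · have := h e
        rw [if_pos (Or.inr hc2)] at this
        simp [hb] at this
  have hmin : min (Real.toNNReal s) 1 = Real.toNNReal s :=
    min_eq_left (Real.toNNReal_le_one.2 hs1)
  have hfalse : (PMF.bernoulli (min (Real.toNNReal s) 1) (min_le_right _ _)).toMeasure
      ({false} : Set Bool) = c := by
    rw [PMF.toMeasure_apply_singleton _ _ (measurableSet_singleton _),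
      PMF.bernoulli_apply, hmin]
    simp only [Bool.cond_false, hc]
    rw [ENNReal.ofReal_sub _ hs0, ENNReal.ofReal_one]
    rw [ENNReal.coe_sub, ENNReal.coe_one]; rfl
  rw [hset, prunMeasure, MeasureTheory.Measure.pi_pi]
  have hcoord : ∀ e : EdgeIdx K n,
      (PMF.bernoulli (min (Real.toNNReal s) 1) (min_le_right _ _)).toMeasure
        (if P e then ({false} : Set Bool) else Set.univ)
      = if P e then c else 1 := by
    intro e
    by_cases h : P e
    · rw [if_pos h, if_pos h, hfalse]
    · rw [if_neg h, if_neg h, measure_univ]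
  rw [Finset.prod_congr rfl (fun e _ => hcoord e), ← Finset.prod_filter,
    Finset.prod_const]
  -- count the edges covering v₁ or v₂
  have hcard : (Finset.univ.filter P).card
      = (v₁ - K - 1) * (n - v₁ + 1) + (v₂ - v₁) * (n - v₂ + 1) := by
    have hbij : (Finset.univ.filter P).card =
        ((Finset.Icc 1 (v₂ - K - 1) ×ˢ Finset.Icc v₂ n) ∪
         (Finset.Icc 1 (v₁ - K - 1) ×ˢ Finset.Icc v₁ (v₂ - 1))).card := by
      apply Finset.card_bij (fun e _ => ((e.1.1 : ℕ), (e.1.2 : ℕ)))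
      · intro e he
        simp only [Finset.mem_filter, Finset.mem_univ, true_and, hP] at he
        obtain ⟨⟨u, w⟩, hu1, huw⟩ := e
        have hw : (w : ℕ) ≤ n := Nat.lt_succ_iff.mp w.isLt
        simp only [Finset.mem_union, Finset.mem_product, Finset.mem_Icc]
        simp only [covers] at he
        dsimp only at he hu1 huw hw ⊢
        omega
      · intro e₁ h₁ e₂ h₂ heq
        apply Subtype.ext
        apply Prod.ext <;> apply Fin.ext
        · exact congrArg Prod.fst heq
        · exact congrArg Prod.snd heq
      · rintro ⟨u, w⟩ hm
        simp only [Finset.mem_union, Finset.mem_product, Finset.mem_Icc] at hm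
        have hu : u < n + 1 := by omega
        have hw : w < n + 1 := by omega
        have hprop : 1 ≤ ((⟨u, hu⟩ : Fin (n + 1)) : ℕ) ∧
            ((⟨u, hu⟩ : Fin (n + 1)) : ℕ) + K < ((⟨w, hw⟩ : Fin (n + 1)) : ℕ) := by
          simp only [Fin.val_mk]; omega
        refine ⟨⟨(⟨u, hu⟩, ⟨w, hw⟩), hprop⟩, ?_, rfl⟩
        simp only [Finset.mem_filter, Finset.mem_univ, true_and, hP, covers,
          Fin.val_mk]
        omega
    rw [hbij, Finset.card_union_of_disjoint, Finset.card_product,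
      Finset.card_product, Nat.card_Icc, Nat.card_Icc, Nat.card_Icc, Nat.card_Icc]
    · have h1 : v₂ - K - 1 + 1 - 1 = (v₁ - K - 1) + (v₂ - v₁) := by omega
      have h2 : n + 1 - v₂ = n - v₂ + 1 := by omega
      have h3 : v₂ - 1 + 1 - v₁ = v₂ - v₁ := by omega
      have h4 : v₁ - K - 1 + 1 - 1 = v₁ - K - 1 := by omega
      have h5 : n - v₁ + 1 = (v₂ - v₁) + (n - v₂ + 1) := by omega
      rw [h1, h2, h3, h4, h5]
      ring
    · rw [Finset.disjoint_left]
      rintro ⟨u, w⟩ ha hb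
      simp only [Finset.mem_product, Finset.mem_Icc] at ha hb
      omega
  rw [hcard, hc, ← ENNReal.ofReal_pow (by linarith : (0:ℝ) ≤ 1 - s)]
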